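/- Let L be a geometric lattice and 𝓖 a building set of L. For any G ∈ 𝓖, the set 𝓖 \ {G} is a building set of L if and only if the join map gives a poset isomorphism from the product of intervals ∏_{F ∈ max (𝓖\{G\})_{≤G}} [0̂, F] onto [0̂, G], where (𝓖\{G})_{≤G} denotes the elements of 𝓖\{G} below G and max denotes its maximal elements. -/

import Mathlib

variable {L : Type*} [CompleteLattice L] [Fintype L]

/-- A finite lattice is geometric if it is atomistic and (upper)
semimodular. -/
def IsGeometricLattice (L : Type*) [CompleteLattice L] [Fintype L] : Prop :=
  IsAtomistic L ∧ ∀ a b : L, a ⊓ b ⋖ a → b ⋖ a ⊔ b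

/-- The maximal elements of `{G ∈ 𝓖 : G ≤ F}`. -/
def maxUnder (𝓖 : Set L) (F : L) : Set L :=
  {G | G ∈ 𝓖 ∧ G ≤ F ∧ ∀ G' ∈ 𝓖, G' ≤ F → G ≤ G' → G' = G}

/-- `𝓖 ⊆ L \ {⊥}` is a *building set* if for every `F ≠ ⊥`, the join map
from the product of the intervals `[⊥, G]`, `G` ranging over the maximal
elements of `𝓖` below `F`, to the interval `[⊥, F]` is an order
isomorphism. -/
def IsBuildingSet (𝓖 : Set L) : Prop :=
  (∀ G ∈ 𝓖, G ≠ ⊥) ∧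
  ∀ F : L, F ≠ ⊥ →
    ∃ φ : (∀ G : maxUnder 𝓖 F, Set.Iic (G : L)) ≃o Set.Iic F,
      ∀ h, (φ h : L) = ⨆ G, ((h G : L))

open Set

section Aux

set_option linter.unusedSectionVars false

theorem exists_phi_congr {S T : Set L} {F : L} (h : S = T)
    (H : ∃ φ : (∀ G : S, Iic (G : L)) ≃o Iic F, ∀ g, (φ g : L) = ⨆ G, ((g G : L))) :
    ∃ φ : (∀ G : T, Iic (G : L)) ≃o Iic F, ∀ g, (φ g : L) = ⨆ G, ((g G : L)) := by
  subst h; exact H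

theorem iSup_union_subtype (A B : Set L) (f : ↥(A ∪ B) → L) :
    ⨆ x, f x = (⨆ a : A, f ⟨a, Or.inl a.2⟩) ⊔ ⨆ b : B, f ⟨b, Or.inr b.2⟩ := by
  apply le_antisymm
  · refine iSup_le ?_
    rintro ⟨v, hv | hv⟩
    · exact le_sup_of_le_left (le_iSup (fun a : A => f ⟨a, Or.inl a.2⟩) ⟨v, hv⟩)
    · exact le_sup_of_le_right (le_iSup (fun b : B => f ⟨b, Or.inr b.2⟩) ⟨v, hv⟩)
  · exact sup_le (iSup_le fun a => le_iSup f _) (iSup_le fun b => le_iSup f _)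

open Classical in
noncomputable def piUnionIso (A B : Set L) (hd : Disjoint A B) :
    (∀ x : ↥(A ∪ B), Iic (x : L)) ≃o (∀ a : ↥A, Iic (a : L)) × (∀ b : ↥B, Iic (b : L)) :=
  { toFun := fun g => ⟨fun a => g ⟨a, Or.inl a.2⟩, fun b => g ⟨b, Or.inr b.2⟩⟩
    invFun := fun p x =>
      if hx : (x : L) ∈ A then p.1 ⟨x, hx⟩ else p.2 ⟨x, x.2.resolve_left hx⟩
    left_inv := fun g => by
      funext x
      by_cases hx : (x : L) ∈ A
      · exact dif_pos hx
      · exact dif_neg hx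
    right_inv := fun p => by
      obtain ⟨p₁, p₂⟩ := p
      refine congrArg₂ Prod.mk ?_ ?_
      · funext a
        exact dif_pos a.2
      · funext b
        exact dif_neg (fun h => Set.disjoint_left.mp hd h b.2)
    map_rel_iff' := by
      intro g g'
      constructor
      · intro hp x
        rcases x.2 with hx | hx
        · exact hp.1 ⟨x, hx⟩
        · exact hp.2 ⟨x, hx⟩
      · intro hgg'
        exact ⟨fun a => hgg' _, fun b => hgg' _⟩ }

open Classical in
theorem piUnionIso_symm_apply_left (A B : Set L) (hd : Disjoint A B)
    (p : (∀ a : ↥A, Iic (a : L)) × (∀ b : ↥B, Iic (b : L))) (x : ↥(A ∪ B))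
    (hx : (x : L) ∈ A) : (piUnionIso A B hd).symm p x = p.1 ⟨x, hx⟩ :=
  dif_pos hx

open Classical in
theorem piUnionIso_symm_apply_right (A B : Set L) (hd : Disjoint A B)
    (p : (∀ a : ↥A, Iic (a : L)) × (∀ b : ↥B, Iic (b : L))) (x : ↥(A ∪ B))
    (hx : (x : L) ∈ B) : (piUnionIso A B hd).symm p x = p.2 ⟨x, hx⟩ :=
  dif_neg (fun h => Set.disjoint_left.mp hd h hx)

def piSingletonIso (G : L) :
    (∀ x : ↥({G} : Set L), Iic (x : L)) ≃o Iic G :=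
  { toFun := fun g => g ⟨G, rfl⟩
    invFun := fun y x => ⟨(y : L), y.2.trans (le_of_eq (Set.mem_singleton_iff.mp x.2).symm)⟩
    left_inv := fun g => by
      funext x
      have hx : x = ⟨G, rfl⟩ := Subtype.ext (Set.mem_singleton_iff.mp x.2)
      subst hx
      exact Subtype.ext rfl
    right_inv := fun y => Subtype.ext rfl
    map_rel_iff' := by
      intro g g'
      constructor
      · intro hgg x
        have hx : x = ⟨G, rfl⟩ := Subtype.ext (Set.mem_singleton_iff.mp x.2)
        subst hx
        exact hgg
      · exact fun h => h _ }

def prodOrderIsoCongr {α β γ δ : Type*} [Preorder α] [Preorder β] [Preorder γ] [Preorder δ]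
    (e₁ : α ≃o β) (e₂ : γ ≃o δ) : α × γ ≃o β × δ :=
  { toEquiv := e₁.toEquiv.prodCongr e₂.toEquiv
    map_rel_iff' := by
      intro p q
      simp [Prod.le_def, e₁.map_rel_iff, e₂.map_rel_iff] }

def piSetCongr {S T : Set L} (h : S = T) :
    (∀ x : ↥S, Iic (x : L)) ≃o (∀ x : ↥T, Iic (x : L)) := by
  subst h; exact OrderIso.refl _

theorem piSetCongr_iSup {S T : Set L} (h : S = T) (g : ∀ x : ↥S, Iic (x : L)) :
    (⨆ x : ↥T, ((piSetCongr h g x : L))) = ⨆ x : ↥S, ((g x : L)) := by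
  subst h; rfl

theorem exists_maximal_above (𝓖 : Set L) (F K : L) (hK : K ∈ 𝓖) (hKF : K ≤ F) :
    ∃ H ∈ maxUnder 𝓖 F, K ≤ H := by
  have hfin : ({G' | G' ∈ 𝓖 ∧ G' ≤ F ∧ K ≤ G'} : Set L).Finite := Set.toFinite _
  obtain ⟨H, hH, hmax⟩ := Set.Finite.exists_maximalFor (id : L → L)
    {G' | G' ∈ 𝓖 ∧ G' ≤ F ∧ K ≤ G'} hfin ⟨K, hK, hKF, le_refl K⟩
  exact ⟨H, ⟨hH.1, hH.2.1, fun G' hG' hG'F hHG' =>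
    le_antisymm (hmax (j := G') ⟨hG', hG'F, hH.2.2.trans hHG'⟩ hHG') hHG'⟩, hH.2.2⟩

open Classical in
noncomputable def deltaFun (S : Set L) (H : L) : ∀ x : ↥S, Iic (x : L) :=
  fun x => if (x : L) = H then ⟨(x : L), le_refl _⟩ else ⊥

/-- Distinct maximal elements of a building set below `F` meet in `⊥`. -/
theorem maxUnder_inf_bot (𝓖 : Set L) (h𝓖 : IsBuildingSet 𝓖) (F : L) (hF : F ≠ ⊥)
    (H₀ H₁ : L) (h0 : H₀ ∈ maxUnder 𝓖 F) (h1 : H₁ ∈ maxUnder 𝓖 F) (hne : H₀ ≠ H₁) :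
    H₀ ⊓ H₁ = ⊥ := by
  classical
  obtain ⟨Φ, hΦ⟩ := h𝓖.2 F hF
  have hd : ∀ H, H ∈ maxUnder 𝓖 F → (Φ (deltaFun (maxUnder 𝓖 F) H) : L) = H := by
    intro H hH
    rw [hΦ]
    apply le_antisymm
    · refine iSup_le fun x => ?_
      simp only [deltaFun]
      by_cases hx : (x : L) = H
      · rw [if_pos hx]
        exact le_of_eq hx
      · rw [if_neg hx, Set.Iic.coe_bot]
        exact bot_le
    · have h := le_iSup (fun x : ↥(maxUnder 𝓖 F) => ((deltaFun (maxUnder 𝓖 F) H x : L)))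
        ⟨H, hH⟩
      simpa [deltaFun] using h
  have hmeet : deltaFun (maxUnder 𝓖 F) H₀ ⊓ deltaFun (maxUnder 𝓖 F) H₁ =
      (⊥ : ∀ x : ↥(maxUnder 𝓖 F), Iic (x : L)) := by
    funext x
    show deltaFun (maxUnder 𝓖 F) H₀ x ⊓ deltaFun (maxUnder 𝓖 F) H₁ x = ⊥
    simp only [deltaFun]
    by_cases hx : (x : L) = H₀
    · have hx' : (x : L) ≠ H₁ := fun h => hne (hx.symm.trans h)
      rw [if_pos hx, if_neg hx']
      exact inf_bot_eq _
    · rw [if_neg hx]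
      exact bot_inf_eq _
  calc H₀ ⊓ H₁
      = (Φ (deltaFun (maxUnder 𝓖 F) H₀) : L) ⊓ (Φ (deltaFun (maxUnder 𝓖 F) H₁) : L) := by
        rw [hd H₀ h0, hd H₁ h1]
    _ = ((Φ (deltaFun (maxUnder 𝓖 F) H₀) ⊓ Φ (deltaFun (maxUnder 𝓖 F) H₁) : Iic F) : L) :=
        (Set.Iic.coe_inf).symm
    _ = ((Φ (deltaFun (maxUnder 𝓖 F) H₀ ⊓ deltaFun (maxUnder 𝓖 F) H₁) : Iic F) : L) := by
        rw [OrderIso.map_inf]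
    _ = ((Φ ⊥ : Iic F) : L) := by rw [hmeet]
    _ = ⊥ := by rw [OrderIso.map_bot, Set.Iic.coe_bot]

/-- If `G` is not maximal below `F`, removing it does not change the maximal set. -/
theorem maxUnder_diff_of_not_max (𝓖 : Set L) (G F : L) (hG : G ∈ 𝓖)
    (hGF : G ∉ maxUnder 𝓖 F) : maxUnder (𝓖 \ {G}) F = maxUnder 𝓖 F := by
  ext H
  constructor
  · rintro ⟨⟨hH𝓖, hHG⟩, hHF, hmax⟩
    refine ⟨hH𝓖, hHF, fun G' hG' hG'F hHG' => ?_⟩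
    by_cases hG'G : G' = G
    · subst hG'G
      exfalso
      have hne : ¬ ∀ G'' ∈ 𝓖, G'' ≤ F → G' ≤ G'' → G'' = G' := fun h => hGF ⟨hG, hG'F, h⟩
      push_neg at hne
      obtain ⟨G'', hG''𝓖, hG''F, hGG'', hneq⟩ := hne
      have hGK : G'' = H := hmax G'' ⟨hG''𝓖, fun hh => hneq (Set.mem_singleton_iff.mp hh)⟩
        hG''F (hHG'.trans hGG'')
      exact hHG (Set.mem_singleton_iff.mpr (le_antisymm hHG' (hGK ▸ hGG'')))
    · exact hmax G' ⟨hG', fun hh => hG'G (Set.mem_singleton_iff.mp hh)⟩ hG'F hHG'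
  · rintro ⟨hH𝓖, hHF, hmax⟩
    have hHne : H ≠ G := fun h => hGF (h ▸ (⟨hH𝓖, hHF, hmax⟩ : H ∈ maxUnder 𝓖 F))
    exact ⟨⟨hH𝓖, fun hh => hHne (Set.mem_singleton_iff.mp hh)⟩, hHF,
      fun G' hG' hG'F hHG' => hmax G' hG'.1 hG'F hHG'⟩

/-- If `G` is maximal below `F`, removing it splits the maximal set. -/
theorem maxUnder_diff_of_max (𝓖 : Set L) (h𝓖 : IsBuildingSet 𝓖) (G F : L) (hG : G ∈ 𝓖)
    (hF : F ≠ ⊥) (hGF : G ∈ maxUnder 𝓖 F) :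
    maxUnder (𝓖 \ {G}) F = (maxUnder 𝓖 F \ {G}) ∪ maxUnder (𝓖 \ {G}) G := by
  ext K
  constructor
  · rintro ⟨⟨hK𝓖, hKG⟩, hKF, hmax⟩
    obtain ⟨H, hHmax, hKH⟩ := exists_maximal_above 𝓖 F K hK𝓖 hKF
    by_cases hH : H = G
    · subst hH
      exact Or.inr ⟨⟨hK𝓖, hKG⟩, hKH,
        fun G' hG' hG'G hKG' => hmax G' hG' (hG'G.trans hGF.2.1) hKG'⟩
    · have hHK : H = K := hmax H ⟨hHmax.1, fun hh => hH (Set.mem_singleton_iff.mp hh)⟩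
        hHmax.2.1 hKH
      exact Or.inl ⟨hHK ▸ hHmax, hKG⟩
  · rintro (⟨⟨hK𝓖, hKF, hmax⟩, hKne⟩ | ⟨⟨hK𝓖, hKG⟩, hKle, hmax⟩)
    · exact ⟨⟨hK𝓖, hKne⟩, hKF, fun G' hG' hG'F hKG' => hmax G' hG'.1 hG'F hKG'⟩
    · refine ⟨⟨hK𝓖, hKG⟩, hKle.trans hGF.2.1, ?_⟩
      intro G' hG' hG'F hKG'
      obtain ⟨H, hHmax, hG'H⟩ := exists_maximal_above 𝓖 F G' hG'.1 hG'F
      by_cases hH : H = G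
      · subst hH
        exact hmax G' hG' hG'H hKG'
      · exfalso
        have hKbot : K ≤ (⊥ : L) := by
          rw [← maxUnder_inf_bot 𝓖 h𝓖 F hF H G hHmax hGF hH]
          exact le_inf (hKG'.trans hG'H) hKle
        exact h𝓖.1 K hK𝓖 (le_bot_iff.mp hKbot)

/-- Gluing lemma: splice an isomorphism for `[⊥, G]` into one for `[⊥, F]`. -/
theorem glue_iso (A B S : Set L) (G F : L) (hdGA : Disjoint ({G} : Set L) A)
    (hdAB : Disjoint A B) (hST : ({G} : Set L) ∪ A = S)
    (Φ₀ : (∀ x : ↥S, Iic (x : L)) ≃o Iic F) (hΦ₀ : ∀ g, (Φ₀ g : L) = ⨆ x, ((g x : L)))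
    (φG : (∀ b : ↥B, Iic (b : L)) ≃o Iic G) (hφG : ∀ g, (φG g : L) = ⨆ b, ((g b : L))) :
    ∃ φ : (∀ x : ↥(A ∪ B), Iic (x : L)) ≃o Iic F, ∀ h, (φ h : L) = ⨆ x, ((h x : L)) := by
  haveI : Nonempty ↥({G} : Set L) := ⟨⟨G, rfl⟩⟩
  refine ⟨(piUnionIso A B hdAB).trans
    ((prodOrderIsoCongr (OrderIso.refl _) φG).trans
      (OrderIso.prodComm.trans
        ((prodOrderIsoCongr (piSingletonIso G).symm (OrderIso.refl _)).trans
          (((piUnionIso ({G} : Set L) A hdGA).symm).trans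
            ((piSetCongr hST).trans Φ₀))))), ?_⟩
  intro h
  have h1 : ∀ x : ↥(({G} : Set L)),
      (((piUnionIso ({G} : Set L) A hdGA).symm
        ⟨(piSingletonIso G).symm (φG fun b => h ⟨b, Or.inr b.2⟩),
          fun a => h ⟨a, Or.inl a.2⟩⟩ ⟨x, Or.inl x.2⟩ : L)) =
        ((φG fun b => h ⟨b, Or.inr b.2⟩ : L)) :=
    fun x => congrArg Subtype.val
      (piUnionIso_symm_apply_left ({G} : Set L) A hdGA _ ⟨x, Or.inl x.2⟩ x.2)
  have h2 : ∀ a : ↥A,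
      (((piUnionIso ({G} : Set L) A hdGA).symm
        ⟨(piSingletonIso G).symm (φG fun b => h ⟨b, Or.inr b.2⟩),
          fun a => h ⟨a, Or.inl a.2⟩⟩ ⟨a, Or.inr a.2⟩ : L)) =
        ((h ⟨a, Or.inl a.2⟩ : L)) :=
    fun a => congrArg Subtype.val
      (piUnionIso_symm_apply_right ({G} : Set L) A hdGA _ ⟨a, Or.inr a.2⟩ a.2)
  refine (hΦ₀ (piSetCongr hST ((piUnionIso ({G} : Set L) A hdGA).symm
      ⟨(piSingletonIso G).symm (φG fun b => h ⟨b, Or.inr b.2⟩),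
        fun a => h ⟨a, Or.inl a.2⟩⟩))).trans ?_
  refine (piSetCongr_iSup hST ((piUnionIso ({G} : Set L) A hdGA).symm
      ⟨(piSingletonIso G).symm (φG fun b => h ⟨b, Or.inr b.2⟩),
        fun a => h ⟨a, Or.inl a.2⟩⟩)).trans ?_
  refine (iSup_union_subtype ({G} : Set L) A (fun x =>
      (((piUnionIso ({G} : Set L) A hdGA).symm
        ⟨(piSingletonIso G).symm (φG fun b => h ⟨b, Or.inr b.2⟩),
          fun a => h ⟨a, Or.inl a.2⟩⟩ x : L)))).trans ?_
  refine (congrArg₂ (· ⊔ ·) ?_ ?_).trans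
    ((sup_comm _ _).trans (iSup_union_subtype A B (fun x => ((h x : L)))).symm)
  · exact (iSup_congr h1).trans (iSup_const.trans (hφG _))
  · exact iSup_congr h2

end Aux

/-- for `G ∈ 𝓖`, the set `𝓖 \ {G}` is a building set if and
only if the join map gives a poset isomorphism from the product of the
intervals `[⊥, F]`, `F` ranging over the maximal elements of `𝓖 \ {G}` below
`G`, onto the interval `[⊥, G]`. -/
theorem building_set_remove_iff (hL : IsGeometricLattice L) (𝓖 : Set L)
    (h𝓖 : IsBuildingSet 𝓖) (G : L) (hG : G ∈ 𝓖) :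
    IsBuildingSet (𝓖 \ {G}) ↔
      ∃ φ : (∀ H : maxUnder (𝓖 \ {G}) G, Set.Iic (H : L)) ≃o Set.Iic G,
        ∀ h, (φ h : L) = ⨆ H, ((h H : L)) := by
  classical
  constructor
  · intro h
    exact h.2 G (h𝓖.1 G hG)
  · rintro ⟨φG, hφG⟩
    refine ⟨fun H hH => h𝓖.1 H hH.1, ?_⟩
    intro F hF
    by_cases hGF : G ∈ maxUnder 𝓖 F
    · -- G is maximal below F: glue the isomorphisms
      have hST : ({G} : Set L) ∪ (maxUnder 𝓖 F \ {G}) = maxUnder 𝓖 F := by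
        rw [Set.singleton_union, Set.insert_diff_singleton, Set.insert_eq_self.mpr hGF]
      have hid : maxUnder (𝓖 \ {G}) F =
          (maxUnder 𝓖 F \ {G}) ∪ maxUnder (𝓖 \ {G}) G :=
        maxUnder_diff_of_max 𝓖 h𝓖 G F hG hF hGF
      have hdGA : Disjoint ({G} : Set L) (maxUnder 𝓖 F \ {G}) := by
        rw [Set.disjoint_left]
        rintro x hx ⟨_, hx2⟩
        exact hx2 hx
      have hdAB : Disjoint (maxUnder 𝓖 F \ {G}) (maxUnder (𝓖 \ {G}) G) := by
        rw [Set.disjoint_left]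
        rintro K ⟨⟨hK𝓖, hKF, hmax⟩, hKne⟩ ⟨⟨_, _⟩, hKG, _⟩
        exact hKne (Set.mem_singleton_iff.mpr (hmax G hG hGF.2.1 hKG).symm)
      obtain ⟨Φ₀, hΦ₀⟩ := h𝓖.2 F hF
      exact exists_phi_congr hid.symm
        (glue_iso (maxUnder 𝓖 F \ {G}) (maxUnder (𝓖 \ {G}) G) (maxUnder 𝓖 F) G F
          hdGA hdAB hST Φ₀ hΦ₀ φG hφG)
    · exact exists_phi_congr (maxUnder_diff_of_not_max 𝓖 G F hG hGF).symm (h𝓖.2 F hF)
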